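/- A 2-dimensional irreducible representation φ = I(ℓ) ⊗ |·|^{-w/2} of W_ℝ (ℓ ≥ 1) preserves, up to the similitude character sgn^w |·|^{-w}, a nondegenerate skew-symmetric bilinear form on its underlying space, and any nonzero bilinear form with this equivariance is skew-symmetric (hence φ does not preserve any nonzero symmetric form with the same similitude character). -/

import Mathlib

/-- The explicit model of `φ = I(ℓ) ⊗ |·|^{-w/2}` on `ℂ²`: on `ℂˣ` it acts by
`diag((z/r)^ℓ r^{-w}, (z̄/r)^ℓ r^{-w})` and on `j` by `[[0,(-1)^ℓ],[1,0]]`. -/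
noncomputable def weilRhoZ (ℓ : ℕ) (w : ℤ) (z : ℂ) : Matrix (Fin 2) (Fin 2) ℂ :=
  Matrix.diagonal
    ![(z / ‖z‖) ^ ℓ * ((‖z‖ : ℂ)) ^ (-w),
      ((starRingEnd ℂ) z / ‖z‖) ^ ℓ * ((‖z‖ : ℂ)) ^ (-w)]

noncomputable def weilRhoJ (ℓ : ℕ) : Matrix (Fin 2) (Fin 2) ℂ :=
  !![(0 : ℂ), (-1 : ℂ) ^ ℓ; 1, 0]

/-- The standard symplectic form on `ℂ²`. -/
noncomputable def mySymp : (Fin 2 → ℂ) →ₗ[ℂ] (Fin 2 → ℂ) →ₗ[ℂ] ℂ :=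
  LinearMap.mk₂ ℂ (fun u v => u 0 * v 1 - u 1 * v 0)
    (by intros; simp; ring) (by intros; simp; ring)
    (by intros; simp; ring) (by intros; simp; ring)

lemma mySymp_apply (u v : Fin 2 → ℂ) : mySymp u v = u 0 * v 1 - u 1 * v 0 := rfl

/-- The scalar identity underlying the similitude character on `ℂˣ`. -/
lemma keyZ (ℓ : ℕ) (w : ℤ) (z : ℂ) (hz : z ≠ 0) :
    ((z / ‖z‖) ^ ℓ * ((‖z‖ : ℂ)) ^ (-w)) *
      (((starRingEnd ℂ) z / ‖z‖) ^ ℓ * ((‖z‖ : ℂ)) ^ (-w))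
    = ((‖z‖ : ℂ) ^ 2) ^ (-w) := by
  have hr : (‖z‖ : ℂ) ≠ 0 := by
    simpa using (norm_ne_zero_iff.mpr hz)
  have h1 : (z / ‖z‖) * ((starRingEnd ℂ) z / ‖z‖) = 1 := by
    rw [div_mul_div_comm, Complex.mul_conj, Complex.normSq_eq_norm_sq]
    push_cast
    field_simp
  calc ((z / ‖z‖) ^ ℓ * ((‖z‖ : ℂ)) ^ (-w)) *
      (((starRingEnd ℂ) z / ‖z‖) ^ ℓ * ((‖z‖ : ℂ)) ^ (-w))
      = ((z / ‖z‖) * ((starRingEnd ℂ) z / ‖z‖)) ^ ℓ *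
        (((‖z‖ : ℂ)) ^ (-w) * ((‖z‖ : ℂ)) ^ (-w)) := by
        rw [mul_pow]; ring
    _ = ((‖z‖ : ℂ) ^ 2) ^ (-w) := by
        rw [h1, one_pow, one_mul, ← zpow_add₀ hr, ← zpow_natCast ((‖z‖ : ℂ)) 2,
          ← zpow_mul, show -w + -w = 2 * -w from by ring]
        norm_num

/-- The parity consequence of `ℓ ≡ w + 1 (mod 2)`. -/
lemma keyPar (ℓ : ℕ) (w : ℤ) (hpar : (ℓ : ℤ) ≡ w + 1 [ZMOD 2]) :
    ((-1 : ℂ)) ^ ℓ = -((-1 : ℂ)) ^ w := by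
  have hne : (-1 : ℂ) ≠ 0 := by norm_num
  obtain ⟨k, hk⟩ := hpar.dvd
  have hℓ : (ℓ : ℤ) = w + 1 - 2 * k := by linarith
  calc ((-1 : ℂ)) ^ ℓ = ((-1 : ℂ)) ^ ((ℓ : ℤ)) := (zpow_natCast _ _).symm
    _ = ((-1 : ℂ)) ^ (w + 1 + (-2) * k) := by rw [hℓ]; ring_nf
    _ = ((-1 : ℂ)) ^ w * ((-1 : ℂ)) ^ (1 : ℤ) * (((-1 : ℂ)) ^ (-2 : ℤ)) ^ k := by
        rw [zpow_add₀ hne, zpow_add₀ hne, zpow_mul]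
    _ = -((-1 : ℂ)) ^ w := by norm_num

/-- For `ℓ ≡ w+1 (mod 2)`, the representation `I(ℓ) ⊗ |·|^{-w/2}` of `W_ℝ`
preserves, with similitude character `sgn^w|·|^{-w}` (value `(r²)^{-w}` on `z ∈ ℂˣ`
and `(-1)^w` on `j`), a nonzero nondegenerate skew-symmetric bilinear form, and
every bilinear form with this equivariance is skew-symmetric. -/
theorem stmt7 (ℓ : ℕ) (hℓ : 1 ≤ ℓ) (w : ℤ) (hpar : (ℓ : ℤ) ≡ w + 1 [ZMOD 2]) :
    (∃ B : (Fin 2 → ℂ) →ₗ[ℂ] (Fin 2 → ℂ) →ₗ[ℂ] ℂ,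
      B ≠ 0 ∧ (∀ u, (∀ v, B u v = 0) → u = 0) ∧ (∀ u v, B u v = - B v u) ∧
      (∀ z : ℂ, z ≠ 0 → ∀ u v,
        B ((weilRhoZ ℓ w z).mulVec u) ((weilRhoZ ℓ w z).mulVec v)
          = ((‖z‖ : ℂ) ^ 2) ^ (-w) * B u v) ∧
      (∀ u v, B ((weilRhoJ ℓ).mulVec u) ((weilRhoJ ℓ).mulVec v) = (-1 : ℂ) ^ w * B u v)) ∧
    (∀ B : (Fin 2 → ℂ) →ₗ[ℂ] (Fin 2 → ℂ) →ₗ[ℂ] ℂ,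
      (∀ z : ℂ, z ≠ 0 → ∀ u v,
        B ((weilRhoZ ℓ w z).mulVec u) ((weilRhoZ ℓ w z).mulVec v)
          = ((‖z‖ : ℂ) ^ 2) ^ (-w) * B u v) →
      (∀ u v, B ((weilRhoJ ℓ).mulVec u) ((weilRhoJ ℓ).mulVec v) = (-1 : ℂ) ^ w * B u v) →
      ∀ u v, B u v = - B v u) := by
  have hpar' := keyPar ℓ w hpar
  have hmvJ : ∀ u : Fin 2 → ℂ, (weilRhoJ ℓ).mulVec u = ![(-1 : ℂ) ^ ℓ * u 1, u 0] := by
    intro u; funext i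
    fin_cases i <;> simp [weilRhoJ, Matrix.mulVec, dotProduct, Fin.sum_univ_two]
  have hmvZ : ∀ (w : ℤ) (z : ℂ) (u : Fin 2 → ℂ), (weilRhoZ ℓ w z).mulVec u =
      ![(z / ‖z‖) ^ ℓ * ((‖z‖ : ℂ)) ^ (-w) * u 0,
        ((starRingEnd ℂ) z / ‖z‖) ^ ℓ * ((‖z‖ : ℂ)) ^ (-w) * u 1] := by
    intro w z u; funext i
    fin_cases i <;> simp [weilRhoZ, Matrix.mulVec_diagonal]
  constructor
  · refine ⟨mySymp, ?_, ?_, ?_, ?_, ?_⟩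
    · intro h
      have h1 : mySymp ![1, 0] ![0, 1] = 1 := by simp [mySymp_apply]
      rw [h] at h1
      simp at h1
    · intro u hu
      have h0 := hu ![0, 1]
      have h1 := hu ![1, 0]
      simp [mySymp_apply] at h0 h1
      funext i
      fin_cases i <;> simp [h0, h1]
    · intro u v; simp [mySymp_apply]; ring
    · intro z hz u v
      rw [hmvZ, hmvZ, ← keyZ ℓ w z hz]
      simp [mySymp_apply]
      ring
    · intro u v
      rw [hmvJ, hmvJ, hpar']
      simp [mySymp_apply]
      ring
  · intro B hZ hJ
    -- expansion of B in the standard basis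
    have hexp : ∀ x y : Fin 2 → ℂ, B x y =
        x 0 * y 0 * B ![1, 0] ![1, 0] + x 0 * y 1 * B ![1, 0] ![0, 1] +
        x 1 * y 0 * B ![0, 1] ![1, 0] + x 1 * y 1 * B ![0, 1] ![0, 1] := by
      intro x y
      have hx : x = x 0 • ![1, 0] + x 1 • ![0, 1] := by
        funext i; fin_cases i <;> simp
      have hy : y = y 0 • ![1, 0] + y 1 • ![0, 1] := by
        funext i; fin_cases i <;> simp
      conv_lhs => rw [hx, hy]
      simp only [map_add, map_smul, LinearMap.add_apply, LinearMap.smul_apply, smul_eq_mul]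
      ring
    set z : ℂ := Complex.exp ((Real.pi / (2 * ℓ) : ℝ) * Complex.I) with hzdef
    have hz : z ≠ 0 := Complex.exp_ne_zero _
    have hℓR : ((ℓ : ℝ)) ≠ 0 := by positivity
    have hℓC : ((ℓ : ℂ)) ≠ 0 := Nat.cast_ne_zero.mpr (by omega)
    have hre : (((Real.pi / (2 * ℓ) : ℝ) : ℂ) * Complex.I).re = 0 := by
      rw [Complex.mul_I_re, Complex.ofReal_im, neg_zero]
    have habs : ‖z‖ = 1 := by
      rw [hzdef, Complex.norm_exp, hre, Real.exp_zero]
    have hpow : z ^ (2 * ℓ) = -1 := by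
      rw [hzdef, ← Complex.exp_nat_mul]
      rw [show ((2 * ℓ : ℕ) : ℂ) * (((Real.pi / (2 * ℓ) : ℝ)) * Complex.I)
          = Real.pi * Complex.I by push_cast; field_simp]
      exact Complex.exp_pi_mul_I
    have hsq : z ^ ℓ * z ^ ℓ = -1 := by rw [← pow_add, ← two_mul]; exact hpow
    have hcsq : ((starRingEnd ℂ) z) ^ ℓ * ((starRingEnd ℂ) z) ^ ℓ = -1 := by
      rw [← pow_add, ← two_mul, ← map_pow, hpow]
      simp
    have hchar : ((‖z‖ : ℂ) ^ 2) ^ (-w) = 1 := by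
      rw [habs]; norm_num
    have hZ1 : ∀ u : Fin 2 → ℂ, (weilRhoZ ℓ w z).mulVec u =
        ![z ^ ℓ * u 0, ((starRingEnd ℂ) z) ^ ℓ * u 1] := by
      intro u
      rw [hmvZ w z u, habs]
      norm_num
    have hwne : ((-1 : ℂ)) ^ w ≠ 0 := zpow_ne_zero _ (by norm_num)
    -- diagonal entries vanish
    have e1 := hZ z hz ![1, 0] ![1, 0]
    rw [hZ1, hchar, one_mul, hexp] at e1
    simp at e1
    have h00 : B ![1, 0] ![1, 0] = 0 := by
      linear_combination (-(1 : ℂ)/2) * (e1 - (B ![1, 0] ![1, 0]) * hsq)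
    have e2 := hZ z hz ![0, 1] ![0, 1]
    rw [hZ1, hchar, one_mul, hexp] at e2
    simp at e2
    have h11 : B ![0, 1] ![0, 1] = 0 := by
      linear_combination (-(1 : ℂ)/2) * (e2 - (B ![0, 1] ![0, 1]) * hcsq)
    -- skewness of the off-diagonal entries
    have e3 := hJ ![1, 0] ![0, 1]
    rw [hmvJ, hmvJ, hpar', hexp] at e3
    simp at e3
    have h10 : B ![0, 1] ![1, 0] = - B ![1, 0] ![0, 1] := by
      apply mul_left_cancel₀ hwne
      linear_combination -e3
    intro u v
    rw [hexp u v, hexp v u]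
    linear_combination (u 0 * v 0 + v 0 * u 0) * h00 + (u 1 * v 1 + v 1 * u 1) * h11 +
      (u 0 * v 1 + u 1 * v 0) * h10
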